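/- Let q be a real number with q < 0. Then for every n ≥ 0 and every x ∈ ℝ, B_n(x|q) = (−1)^{n(n−1)/2} · |q|^{n(n−2)/2} · H_n(−√|q|·x | 1/q), where |q|^{n(n−2)/2} denotes the real power of the positive real number |q|. -/

import Mathlib

open MeasureTheory Finset

noncomputable section

/-- The `q`-integer `[n]_q = 1 + q + ⋯ + q^{n-1}`. -/
def qInt (q : ℝ) (n : ℕ) : ℝ := ∑ i ∈ Finset.range n, q ^ i

/-- The (renormalized) continuous `q`-Hermite polynomials, as functions:
`H_{-1} = 0`, `H_0 = 1`, `H_{n+1}(x) = x H_n(x) - [n]_q H_{n-1}(x)`. -/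
def qHermite (q : ℝ) : ℕ → ℝ → ℝ
  | 0 => fun _ => 1
  | 1 => fun x => x
  | n + 2 => fun x => x * qHermite q (n + 1) x - qInt q (n + 1) * qHermite q n x


/-- The polynomials `B_n(x|q)`, as functions on `ℝ`:
`B_{-1} = 0`, `B_0 = 1`, `B_{n+1}(x) = -q^n x B_n(x) + q^{n-1} [n]_q B_{n-1}(x)`. -/
def Bpoly (q : ℝ) : ℕ → ℝ → ℝ
  | 0 => fun _ => 1
  | 1 => fun x => -x
  | n + 2 => fun x => -(q ^ (n + 1)) * x * Bpoly q (n + 1) x + q ^ n * qInt q (n + 1) * Bpoly q n x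

/-- Identity (5), case `q < 0`:
`B_n(x|q) = (-1)^{n(n-1)/2} |q|^{n(n-2)/2} H_n(-√|q| x | 1/q)`, where `|q|^{n(n-2)/2}` is
the real power of the positive real `|q|`. -/
lemma tri1 (n : ℕ) : (n+1)*n/2 = n*(n-1)/2 + n := by
  cases n with
  | zero => decide
  | succ m =>
    obtain ⟨k, hk⟩ := Nat.even_mul_succ_self m
    simp only [Nat.add_sub_cancel]
    have e1 : (m+1+1)*(m+1) = m*(m+1)+2*(m+1) := by ring
    have e2 : (m+1)*m = m*(m+1) := by ring
    omega

lemma tri2 (n : ℕ) : (n+2)*(n+1)/2 = n*(n-1)/2 + (2*n+1) := by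
  cases n with
  | zero => decide
  | succ m =>
    obtain ⟨k, hk⟩ := Nat.even_mul_succ_self m
    simp only [Nat.add_sub_cancel]
    have e1 : (m+1+2)*(m+1+1) = m*(m+1)+4*(m+1)+2 := by ring
    have e2 : (m+1)*m = m*(m+1) := by ring
    omega

lemma qInt_inv (q : ℝ) (hq : q ≠ 0) (n : ℕ) :
    qInt (1/q) (n+1) = (1/q)^n * qInt q (n+1) := by
  unfold qInt
  rw [Finset.mul_sum, ← Finset.sum_range_reflect (fun i => (1/q)^i) (n+1)]
  apply Finset.sum_congr rfl
  intro i hi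
  have hi' : i ≤ n := Nat.lt_succ_iff.mp (Finset.mem_range.mp hi)
  rw [show n+1-1-i = n-i from by omega]
  rw [show (1/q)^n = (1/q)^(n-i) * (1/q)^i from by rw [← pow_add]; congr 1; omega]
  field_simp
  rw [← mul_pow, one_div_mul_cancel hq, one_pow]

lemma aux (q : ℝ) (hq : q < 0) : ∀ (n : ℕ) (x : ℝ),
    Bpoly q n x =
      (-1) ^ (n * (n - 1) / 2) * |q| ^ (((n : ℝ) * ((n : ℝ) - 2)) / 2) *
        qHermite (1 / q) n (-Real.sqrt |q| * x)
  | 0, x => by simp [Bpoly, qHermite]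
  | 1, x => by
    have ha : (0:ℝ) < |q| := abs_pos.mpr hq.ne
    simp only [Bpoly, qHermite]
    have key : |q| ^ (-(1/2) : ℝ) * Real.sqrt |q| = 1 := by
      rw [Real.sqrt_eq_rpow, ← Real.rpow_add ha]; norm_num
    norm_num
    linear_combination (-x) * key
  | n+2, x => by
    have ha : (0:ℝ) < |q| := abs_pos.mpr hq.ne
    have hqa : q = -|q| := by rw [abs_of_neg hq, neg_neg]
    have h1 := aux q hq (n+1) x
    have h0 := aux q hq n x
    simp only [Bpoly, qHermite, Nat.add_sub_cancel]
    rw [h1, h0, qInt_inv q hq.ne n]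
    push_cast
    set s := qHermite (1/q) (n+1) (-Real.sqrt |q| * x) with hs
    set t := qHermite (1/q) n (-Real.sqrt |q| * x) with ht
    set u := qInt q (n+1) with hu
    have sign1 : ((-1:ℝ))^((n+1)*n/2) = (-1)^(n*(n-1)/2) * (-1)^n := by
      rw [tri1, pow_add]
    have sign2 : ((-1:ℝ))^((n+2)*(n+1)/2) = -((-1:ℝ))^(n*(n-1)/2) := by
      rw [tri2, pow_add, pow_add, pow_mul]
      norm_num
    have rpow2 : |q| ^ ((((n:ℝ)+2) * (((n:ℝ)+2) - 2)) / 2)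
        = |q| ^ (((n:ℝ) * ((n:ℝ) - 2)) / 2) * |q| ^ (2*n) := by
      rw [← Real.rpow_natCast |q| (2*n), ← Real.rpow_add ha]
      congr 1
      push_cast
      ring
    have rpow1 : |q| ^ ((((n:ℝ)+1) * (((n:ℝ)+1) - 2)) / 2) * Real.sqrt |q|
        = |q| ^ (((n:ℝ) * ((n:ℝ) - 2)) / 2) * |q| ^ n := by
      rw [Real.sqrt_eq_rpow, ← Real.rpow_natCast |q| n, ← Real.rpow_add ha,
        ← Real.rpow_add ha]
      congr 1
      ring
    have hsqrt : Real.sqrt |q| ≠ 0 := by positivity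
    have hss : Real.sqrt |q| * Real.sqrt |q| = |q| := Real.mul_self_sqrt (abs_nonneg q)
    have hnn : ((-1:ℝ))^n * (-1)^n = 1 := by
      rw [← pow_add]; exact Even.neg_one_pow ⟨n, rfl⟩
    have habs : q^n = (-1:ℝ)^n * |q|^n := by
      rw [← neg_pow, ← hqa]
    have hq1 : q^(n+1) = -((-1:ℝ)^n * |q|^n * |q|) := by
      conv_lhs => rw [pow_succ, habs]
      linear_combination ((-1:ℝ)^n * |q|^n) * hqa
    have hqn : ((-1:ℝ))^n * |q|^n * (1/q)^n = 1 := by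
      rw [← habs, ← mul_pow, mul_one_div, div_self hq.ne, one_pow]
    have e1 : -(q^(n+1)) * ((-1:ℝ)^((n+1)*n/2) * |q| ^ ((((n:ℝ)+1) * (((n:ℝ)+1) - 2)) / 2))
        = ((-1:ℝ)^((n+2)*(n+1)/2) * |q| ^ ((((n:ℝ)+2) * (((n:ℝ)+2) - 2)) / 2)) * (-Real.sqrt |q|) := by
      apply mul_right_cancel₀ hsqrt
      rw [sign1, sign2, rpow2, hq1]
      linear_combination (|q|^n * |q| * (-1:ℝ)^(n*(n-1)/2) *
            |q| ^ ((((n:ℝ)+1) * (((n:ℝ)+1) - 2)) / 2) * Real.sqrt |q|) * hnn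
        + ((-1:ℝ)^(n*(n-1)/2) * |q|^n * |q|) * rpow1
        - ((-1:ℝ)^(n*(n-1)/2) * |q| ^ (((n:ℝ) * ((n:ℝ) - 2)) / 2) * |q|^n * |q|^n) * hss
    have e2 : q^n * ((-1:ℝ)^(n*(n-1)/2) * |q| ^ (((n:ℝ) * ((n:ℝ) - 2)) / 2))
        = ((-1:ℝ)^((n+2)*(n+1)/2) * |q| ^ ((((n:ℝ)+2) * (((n:ℝ)+2) - 2)) / 2)) * (-(1/q)^n) := by
      rw [sign2, rpow2, habs]
      linear_combination ((-1:ℝ)^(n*(n-1)/2) * |q| ^ (((n:ℝ) * ((n:ℝ) - 2)) / 2) * |q|^n * |q|^n * (1/q)^n) * hnn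
        - ((-1:ℝ)^(n*(n-1)/2) * |q| ^ (((n:ℝ) * ((n:ℝ) - 2)) / 2) * (-1:ℝ)^n * |q|^n) * hqn
    linear_combination (x*s) * e1 + (u*t) * e2

theorem Bpoly_eq_qHermite_of_neg (q : ℝ) (hq : q < 0) (n : ℕ) (x : ℝ) :
    Bpoly q n x =
      (-1) ^ (n * (n - 1) / 2) * |q| ^ (((n : ℝ) * ((n : ℝ) - 2)) / 2) *
        qHermite (1 / q) n (-Real.sqrt |q| * x) := by
  exact aux q hq n x
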